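/- The map S̃: ℐ → ℐ with S̃([k]) = (−1)^{dep k}[k]^⋆ is an algebra homomorphism for the harmonic product: S̃(u ∗ v) = S̃(u) ∗ S̃(v) for all u, v ∈ ℐ. -/

import Mathlib

/-- An index: a finite sequence of positive integers. -/
abbrev Idx := List ℕ+

/-- The `ℚ`-linear space `ℐ` spanned by formal symbols of indices. -/
abbrev IdxAlg := Idx →₀ ℚ

/-- Auxiliary harmonic product on indices *stored in reversed order*, so that the
recursion acts on the last components of the original indices, as in the paper:
`[k,k]∗[l,l] = [([k,k]∗[l]),l] + [([k]∗[l,l]),k] + [([k]∗[l]),k+l]`. -/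
noncomputable def hpAux : Idx → Idx → IdxAlg
  | [], l => Finsupp.single l 1
  | a :: as, [] => Finsupp.single (a :: as) 1
  | a :: as, b :: bs =>
      Finsupp.mapDomain (a :: ·) (hpAux as (b :: bs)) +
      Finsupp.mapDomain (b :: ·) (hpAux (a :: as) bs) +
      Finsupp.mapDomain ((a + b) :: ·) (hpAux as bs)
termination_by k l => k.length + l.length

/-- The harmonic (stuffle) product of two index symbols. -/
noncomputable def hp (k l : Idx) : IdxAlg :=
  Finsupp.mapDomain List.reverse (hpAux k.reverse l.reverse)

/-- The bilinear extension of the harmonic product to `ℐ`. -/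
noncomputable def hmul (u v : IdxAlg) : IdxAlg :=
  u.sum fun k ck => v.sum fun l cl => (ck * cl) • hp k l

/-- The star-sum `[l₁,…,l_s]^⋆`: the sum of all `[l₁□⋯□l_s]` with each `□` replaced by
`+` or `,`. -/
noncomputable def starSym : Idx → IdxAlg
  | [] => Finsupp.single [] 1
  | [a] => Finsupp.single [a] 1
  | a :: b :: rest =>
      Finsupp.mapDomain (a :: ·) (starSym (b :: rest)) + starSym ((a + b) :: rest)
termination_by l => l.length

/-- The linear map `S̃ : ℐ → ℐ` with `S̃([k]) = (−1)^{dep k}[k]^⋆`. -/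
noncomputable def Stilde (u : IdxAlg) : IdxAlg :=
  u.sum fun k c => ((-1 : ℚ) ^ k.length * c) • starSym k

namespace StildeAux

noncomputable def dl (w : Idx) : IdxAlg := Finsupp.single w 1

noncomputable def Dm (x : ℕ+) : IdxAlg →ₗ[ℚ] IdxAlg := Finsupp.lmapDomain ℚ ℚ (x :: ·)

noncomputable def esing (x : ℕ+) : Idx → IdxAlg
  | [] => 0
  | c :: t => Finsupp.single ((x + c) :: t) 1

noncomputable def Em (x : ℕ+) : IdxAlg →ₗ[ℚ] IdxAlg :=
  Finsupp.lsum ℚ fun w => LinearMap.toSpanSingleton ℚ IdxAlg (esing x w)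

noncomputable def Fm (x : ℕ+) : IdxAlg →ₗ[ℚ] IdxAlg := Dm x + Em x

noncomputable def hmL : IdxAlg →ₗ[ℚ] IdxAlg →ₗ[ℚ] IdxAlg :=
  Finsupp.lsum ℚ fun k => LinearMap.toSpanSingleton ℚ (IdxAlg →ₗ[ℚ] IdxAlg)
    (Finsupp.lsum ℚ fun l => LinearMap.toSpanSingleton ℚ IdxAlg (hpAux k l))

noncomputable def StL : IdxAlg →ₗ[ℚ] IdxAlg :=
  Finsupp.lsum ℚ fun k => LinearMap.toSpanSingleton ℚ IdxAlg (((-1 : ℚ) ^ k.length) • starSym k)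

noncomputable def RevL : IdxAlg →ₗ[ℚ] IdxAlg := Finsupp.lmapDomain ℚ ℚ List.reverse

@[simp] lemma Dm_single (x : ℕ+) (w : Idx) (c : ℚ) :
    Dm x (Finsupp.single w c) = Finsupp.single (x :: w) c := by
  simp [Dm, Finsupp.lmapDomain_apply, Finsupp.mapDomain_single]

@[simp] lemma Em_single_nil (x : ℕ+) (c : ℚ) : Em x (Finsupp.single [] c) = 0 := by
  simp [Em, esing]

@[simp] lemma Em_single_cons (x d : ℕ+) (t : Idx) (c : ℚ) :
    Em x (Finsupp.single (d :: t) c) = Finsupp.single ((x + d) :: t) c := by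
  simp [Em, esing, Finsupp.smul_single]

@[simp] lemma RevL_single (w : Idx) (c : ℚ) :
    RevL (Finsupp.single w c) = Finsupp.single w.reverse c := by
  simp [RevL, Finsupp.lmapDomain_apply, Finsupp.mapDomain_single]

lemma Dm_apply (x : ℕ+) (u : IdxAlg) : Dm x u = Finsupp.mapDomain (x :: ·) u := rfl

lemma RevL_apply (u : IdxAlg) : RevL u = Finsupp.mapDomain List.reverse u := rfl

@[simp] lemma StL_single (w : Idx) (c : ℚ) :
    StL (Finsupp.single w c) = (((-1 : ℚ) ^ w.length) * c) • starSym w := by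
  simp [StL, mul_comm, smul_smul]

@[simp] lemma hmL_single_single (k l : Idx) (c d : ℚ) :
    hmL (Finsupp.single k c) (Finsupp.single l d) = (c * d) • hpAux k l := by
  simp [hmL, mul_comm, smul_smul]



@[simp] lemma Fm_single_nil (x : ℕ+) (c : ℚ) :
    Fm x (Finsupp.single ([] : Idx) c) = Finsupp.single [x] c := by
  simp [Fm, LinearMap.add_apply]

@[simp] lemma Fm_single_cons (x d : ℕ+) (t : Idx) (c : ℚ) :
    Fm x (Finsupp.single (d :: t) c) =
      Finsupp.single (x :: d :: t) c + Finsupp.single ((x + d) :: t) c := by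
  simp [Fm, LinearMap.add_apply]

lemma Em_Dm (x y : ℕ+) (u : IdxAlg) : Em x (Dm y u) = Dm (x + y) u := by
  have : Em x ∘ₗ Dm y = Dm (x + y) := by
    apply Finsupp.lhom_ext
    intro w c
    simp
  exact DFunLike.congr_fun this u

lemma Em_Fm (x y : ℕ+) (u : IdxAlg) : Em x (Fm y u) = Fm (x + y) u := by
  have : Em x ∘ₗ Fm y = Fm (x + y) := by
    apply Finsupp.lhom_ext
    intro w c
    cases w with
    | nil => simp
    | cons d t => simp [add_assoc]
  exact DFunLike.congr_fun this u


lemma Fm_apply (x : ℕ+) (u : IdxAlg) : Fm x u = Dm x u + Em x u := rfl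

lemma starSym_cons (x : ℕ+) (m : Idx) : starSym (x :: m) = Fm x (starSym m) := by
  induction m using starSym.induct generalizing x with
  | case1 => simp [starSym]
  | case2 a => simp [starSym, Dm_apply]
  | case3 a b rest ih1 ih2 =>
      rw [show starSym (x :: a :: b :: rest) =
        Finsupp.mapDomain (x :: ·) (starSym (a :: b :: rest)) + starSym ((x + a) :: b :: rest)
        from by rw [starSym]]
      rw [← Dm_apply, ih1 (x + a), ih1 a, Fm_apply x, Em_Fm]

lemma StL_Dm (x : ℕ+) (u : IdxAlg) : StL (Dm x u) = -(Fm x (StL u)) := by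
  have : StL ∘ₗ Dm x = -(Fm x ∘ₗ StL) := by
    apply Finsupp.lhom_ext
    intro w c
    simp only [LinearMap.comp_apply, LinearMap.neg_apply, Dm_single, StL_single,
      starSym_cons, List.length_cons, map_smul]
    rw [pow_succ]
    ring_nf
    rw [neg_smul]
  exact DFunLike.congr_fun this u

lemma hpAux_nil_left (l : Idx) : hpAux [] l = Finsupp.single l 1 := by rw [hpAux]

lemma hpAux_nil_right (k : Idx) : hpAux k [] = Finsupp.single k 1 := by
  cases k <;> rw [hpAux]

lemma hpAux_cons_cons (a b : ℕ+) (as bs : Idx) :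
    hpAux (a :: as) (b :: bs) =
      Dm a (hpAux as (b :: bs)) + Dm b (hpAux (a :: as) bs) + Dm (a + b) (hpAux as bs) := by
  rw [hpAux]; rfl

lemma hmL_nil_left (v : IdxAlg) : hmL (Finsupp.single ([] : Idx) 1) v = v := by
  have : hmL (Finsupp.single ([] : Idx) 1) = LinearMap.id := by
    apply Finsupp.lhom_ext
    intro l c
    simp [hpAux_nil_left, Finsupp.smul_single]
  rw [this]; rfl

lemma hmL_nil_right (u : IdxAlg) : hmL u (Finsupp.single ([] : Idx) 1) = u := by
  have : (LinearMap.flip hmL) (Finsupp.single ([] : Idx) 1) = LinearMap.id := by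
    apply Finsupp.lhom_ext
    intro k c
    simp [LinearMap.flip_apply, hpAux_nil_right, Finsupp.smul_single]
  exact DFunLike.congr_fun this u |>.trans rfl |>.trans (by rfl)

noncomputable def Fm' (x : ℕ+) : IdxAlg →ₗ[ℚ] IdxAlg := RevL ∘ₗ Fm x ∘ₗ RevL

lemma RevL_RevL (u : IdxAlg) : RevL (RevL u) = u := by
  have : RevL ∘ₗ RevL = LinearMap.id := by
    apply Finsupp.lhom_ext
    intro w c
    simp
  exact DFunLike.congr_fun this u

lemma Fm'_single (x : ℕ+) (w : Idx) (c : ℚ) :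
    Fm' x (Finsupp.single w c) = RevL (Fm x (Finsupp.single w.reverse c)) := by
  simp [Fm']

@[simp] lemma Fm'_single_nil (x : ℕ+) (c : ℚ) :
    Fm' x (Finsupp.single ([] : Idx) c) = Finsupp.single [x] c := by
  simp [Fm'_single]

-- helper: Fm' on a cons with nonempty tail pushes through the head
lemma Fm'_single_cons (x y : ℕ+) (w : Idx) (c : ℚ) (hw : w ≠ []) :
    Fm' x (Finsupp.single (y :: w) c) = Dm y (Fm' x (Finsupp.single w c)) := by
  obtain ⟨h, t', ht⟩ : ∃ h t', w.reverse = h :: t' := by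
    cases hwr : w.reverse with
    | nil => exact absurd (by simpa using congrArg List.reverse hwr) hw
    | cons h t' => exact ⟨h, t', rfl⟩
  have hyw : (y :: w).reverse = h :: (t' ++ [y]) := by
    simp [List.reverse_cons, ht]
  rw [Fm'_single, Fm'_single, hyw, ht]
  simp only [Fm_single_cons, map_add, RevL_single]
  simp [List.reverse_cons, Dm_apply, Finsupp.mapDomain_single]

lemma Fm_Dm (x y : ℕ+) (u : IdxAlg) : Fm x (Dm y u) = Dm x (Dm y u) + Dm (x + y) u := by
  rw [Fm_apply, Em_Dm]


lemma Fm'_single_one (x d : ℕ+) (q : ℚ) :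
    Fm' x (Finsupp.single [d] q) = Finsupp.single [d, x] q + Finsupp.single [x + d] q := by
  rw [Fm'_single]; simp [List.reverse_cons]

lemma Fm_Fm'_comm (c x : ℕ+) (u : IdxAlg) : Fm c (Fm' x u) = Fm' x (Fm c u) := by
  have : Fm c ∘ₗ Fm' x = Fm' x ∘ₗ Fm c := by
    apply Finsupp.lhom_ext
    intro w q
    simp only [LinearMap.comp_apply]
    match w with
    | [] => simp [Fm'_single_one, add_comm]
    | [d] =>
        rw [Fm'_single_one, Fm_single_cons]
        simp only [map_add, Fm_single_cons, Fm_single_nil, Fm'_single_one,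
          Fm'_single_cons x c [d] q (by simp), Fm'_single_one, Dm_single]
        simp only [add_comm, add_left_comm, add_assoc]
    | d :: e :: r =>
        rw [Fm'_single_cons x d (e :: r) q (by simp), Fm_Dm, Fm_single_cons]
        rw [map_add, Fm'_single_cons x c (d :: e :: r) q (by simp),
          Fm'_single_cons x (c + d) (e :: r) q (by simp),
          Fm'_single_cons x d (e :: r) q (by simp)]
  exact DFunLike.congr_fun this u

lemma starSym_snoc (x : ℕ+) (w : Idx) : starSym (w ++ [x]) = Fm' x (starSym w) := by
  induction w with
  | nil => simp [starSym]
  | cons c r ih =>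
      rw [List.cons_append, starSym_cons, ih, starSym_cons, Fm_Fm'_comm]

lemma starSym_reverse (w : Idx) : starSym w.reverse = RevL (starSym w) := by
  induction w with
  | nil => simp [starSym]
  | cons x r ih =>
      rw [List.reverse_cons, starSym_snoc, ih, starSym_cons, Fm', LinearMap.comp_apply,
        LinearMap.comp_apply, RevL_RevL]

lemma StL_RevL (u : IdxAlg) : StL (RevL u) = RevL (StL u) := by
  have : StL ∘ₗ RevL = RevL ∘ₗ StL := by
    apply Finsupp.lhom_ext
    intro w c
    simp only [LinearMap.comp_apply, RevL_single, StL_single, List.length_reverse,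
      starSym_reverse, map_smul]
  exact DFunLike.congr_fun this u

lemma pac (x y : ℕ+) : x + y = y + x := add_comm x y
lemma pal (x y z : ℕ+) : x + (y + z) = y + (x + z) := add_left_comm x y z
lemma paa (x y z : ℕ+) : x + y + z = x + (y + z) := add_assoc x y z

lemma starS (a b : ℕ+) (p q : Idx) :
    hmL (Fm a (Finsupp.single p 1)) (Fm b (Finsupp.single q 1)) =
      Fm a (hmL (Finsupp.single p 1) (Fm b (Finsupp.single q 1))) +
      Fm b (hmL (Fm a (Finsupp.single p 1)) (Finsupp.single q 1)) -
      Fm (a + b) (hpAux p q) := by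
  match p, q with
  | [], [] =>
      simp only [Fm_single_nil, hmL_single_single, one_mul, one_smul, hpAux_nil_left,
        hpAux_nil_right, hpAux_cons_cons, map_add, Fm_Dm, Fm_single_cons,
        Dm_single, Em_Dm, LinearMap.add_apply]
      simp only [pac, pal, paa]
      abel
  | [], d :: t =>
      simp only [Fm_single_nil, Fm_single_cons, map_add, LinearMap.add_apply,
        hmL_single_single, one_mul, one_smul, hpAux_nil_left, hpAux_nil_right,
        hpAux_cons_cons, Fm_Dm, Dm_single, Em_Dm]
      simp only [pac, pal, paa]
      abel
  | c :: s, [] =>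
      simp only [Fm_single_nil, Fm_single_cons, map_add, LinearMap.add_apply,
        hmL_single_single, one_mul, one_smul, hpAux_nil_left, hpAux_nil_right,
        hpAux_cons_cons, Fm_Dm, Dm_single, Em_Dm]
      simp only [pac, pal, paa]
      abel
  | c :: s, d :: t =>
      simp only [Fm_single_nil, Fm_single_cons, map_add, LinearMap.add_apply,
        hmL_single_single, one_mul, one_smul, hpAux_nil_left, hpAux_nil_right,
        hpAux_cons_cons, Fm_Dm, Dm_single, Em_Dm]
      simp only [pac, pal, paa]
      abel

lemma single_eq_smul (p : Idx) (c : ℚ) :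
    (Finsupp.single p c : IdxAlg) = c • Finsupp.single p 1 := by
  simp [Finsupp.smul_single]

lemma star15 (a b : ℕ+) (u v : IdxAlg) :
    hmL (Fm a u) (Fm b v) =
      Fm a (hmL u (Fm b v)) + Fm b (hmL (Fm a u) v) - Fm (a + b) (hmL u v) := by
  induction u using Finsupp.induction_linear with
  | zero => simp
  | add f g hf hg =>
      simp only [map_add, LinearMap.add_apply, hf, hg]
      abel
  | single p c =>
      induction v using Finsupp.induction_linear with
      | zero => simp
      | add f g hf hg =>
          simp only [map_add, LinearMap.add_apply, hf, hg]
          abel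
      | single q e =>
          rw [single_eq_smul p c, single_eq_smul q e]
          simp only [map_smul, LinearMap.smul_apply, LinearMap.map_smul]
          rw [starS a b p q]
          rw [show hmL (Finsupp.single p 1) (Finsupp.single q 1) = hpAux p q by simp]
          simp only [smul_sub, smul_add, smul_smul, mul_comm e c]

lemma core (k l : Idx) :
    StL (hpAux k l) =
      ((-1 : ℚ) ^ (k.length + l.length)) • hmL (starSym k) (starSym l) := by
  induction k, l using hpAux.induct with
  | case1 l =>
      rw [hpAux_nil_left, StL_single]
      rw [show (starSym [] : IdxAlg) = Finsupp.single [] 1 from by rw [starSym]]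
      rw [hmL_nil_left]
      simp
  | case2 a as =>
      rw [hpAux_nil_right, StL_single]
      rw [show (starSym [] : IdxAlg) = Finsupp.single [] 1 from by rw [starSym]]
      rw [hmL_nil_right]
      simp
  | case3 a as b bs ih1 ih2 ih3 =>
      rw [hpAux_cons_cons]
      simp only [map_add, StL_Dm, ih1, ih2, ih3, List.length_cons]
      rw [starSym_cons, starSym_cons, star15]
      set n := as.length
      set m := bs.length
      have h1 : n + (m + 1) = (n + m) + 1 := by omega
      have h2 : (n + 1) + m = (n + m) + 1 := by omega
      have h3 : (n + 1) + (m + 1) = (n + m) + 1 + 1 := by omega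
      rw [h1, h2, h3, pow_succ, pow_succ, pow_succ]
      simp only [map_smul, smul_add, smul_sub, smul_smul]
      module

lemma Stilde_eq (u : IdxAlg) : Stilde u = StL u := by
  rw [Stilde, StL, Finsupp.lsum_apply]
  refine Finsupp.sum_congr fun k _ => ?_
  rw [LinearMap.toSpanSingleton_apply, smul_smul, mul_comm]

lemma hmul_zero_left (v : IdxAlg) : hmul 0 v = 0 := by
  simp [hmul]

lemma hmul_zero_right (u : IdxAlg) : hmul u 0 = 0 := by
  simp [hmul]

lemma hmul_single_single (k l : Idx) (c e : ℚ) :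
    hmul (Finsupp.single k c) (Finsupp.single l e) = (c * e) • hp k l := by
  rw [hmul, Finsupp.sum_single_index, Finsupp.sum_single_index]
  · simp
  · simp

lemma hmul_add_left (f g v : IdxAlg) : hmul (f + g) v = hmul f v + hmul g v := by
  rw [hmul, hmul, hmul]
  apply Finsupp.sum_add_index' <;> intros <;> simp [add_mul, add_smul, Finsupp.sum_add]

lemma hmul_add_right (u f g : IdxAlg) : hmul u (f + g) = hmul u f + hmul u g := by
  rw [hmul, hmul, hmul, ← Finsupp.sum_add]
  refine Finsupp.sum_congr fun k _ => ?_
  apply Finsupp.sum_add_index' <;> intros <;> simp [mul_add, add_smul]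

lemma hmul_eq (u v : IdxAlg) : hmul u v = RevL (hmL (RevL u) (RevL v)) := by
  induction u using Finsupp.induction_linear with
  | zero => simp [hmul_zero_left]
  | add f g hf hg => rw [hmul_add_left, hf, hg]; simp [map_add, LinearMap.add_apply]
  | single k c =>
      induction v using Finsupp.induction_linear with
      | zero => simp [hmul_zero_right]
      | add f g hf hg => rw [hmul_add_right, hf, hg]; simp [map_add]
      | single l e =>
          rw [hmul_single_single]
          simp only [RevL_single, hmL_single_single, map_smul]
          rw [hp, RevL_apply]

lemma StL_hmL (u v : IdxAlg) : StL (hmL u v) = hmL (StL u) (StL v) := by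
  induction u using Finsupp.induction_linear with
  | zero => simp
  | add f g hf hg => simp only [map_add, LinearMap.add_apply, hf, hg]
  | single k c =>
      induction v using Finsupp.induction_linear with
      | zero => simp
      | add f g hf hg => simp only [map_add, LinearMap.add_apply, hf, hg]
      | single l e =>
          rw [hmL_single_single, map_smul, core, StL_single, StL_single]
          simp only [map_smul, LinearMap.smul_apply, smul_smul]
          rw [pow_add]
          ring_nf

end StildeAux

/-- `S̃` is an algebra homomorphism for the harmonic product:
`S̃(u ∗ v) = S̃(u) ∗ S̃(v)`. -/
theorem Stilde_hmul : ∀ u v : IdxAlg, Stilde (hmul u v) = hmul (Stilde u) (Stilde v) := by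
  intro u v
  open StildeAux in
  rw [Stilde_eq, Stilde_eq, Stilde_eq, hmul_eq u v, hmul_eq, StL_RevL, StL_hmL,
    ← StL_RevL, ← StL_RevL]
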